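/- For every n ≥ 1, the integral ∫_{-∞}^{∞} x^n / sinh(x) dx equals (1-(-1)^n)(2^{n+1}-1)/2^n · n! · ζ(n+1), where ζ is the Riemann zeta function. In particular the integral vanishes for even n. -/

import Mathlib

open MeasureTheory Real Set Filter Asymptotics

private lemma aux_integrable (n : ℕ) {c : ℝ} (hc : 0 < c) :
    IntegrableOn (fun x : ℝ => x ^ n * Real.exp (-(c * x))) (Ioi 0) := by
  apply integrable_of_isBigO_exp_neg (half_pos hc)
  · exact ((continuous_pow n).mul (Real.continuous_exp.comp (by continuity))).continuousOn
  · have h : Filter.Tendsto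
        (fun x : ℝ => x ^ n * Real.exp (-(c * x)) / Real.exp (-(c / 2) * x)) atTop (nhds 0) := by
      refine (tendsto_rpow_mul_exp_neg_mul_atTop_nhds_zero (n : ℝ) (c / 2)
        (half_pos hc)).congr' ?_
      filter_upwards [eventually_ge_atTop (0 : ℝ)] with x hx
      rw [Real.rpow_natCast, eq_div_iff (Real.exp_ne_zero _), mul_assoc, ← Real.exp_add]
      congr 2
      ring
    exact (Asymptotics.isLittleO_of_tendsto
      (fun x hx => absurd hx (Real.exp_ne_zero _)) h).isBigO

private lemma aux_integral (n : ℕ) {c : ℝ} (hc : 0 < c) :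
    ∫ x in Ioi (0:ℝ), x ^ n * Real.exp (-(c * x)) = (n.factorial : ℝ) / c ^ (n + 1) := by
  have h := Real.integral_rpow_mul_exp_neg_mul_Ioi (a := (n : ℝ) + 1) (by positivity) hc
  rw [add_sub_cancel_right] at h
  simp_rw [Real.rpow_natCast] at h
  rw [h, Real.Gamma_nat_eq_factorial,
    show ((n : ℝ) + 1) = ((n + 1 : ℕ) : ℝ) by push_cast; ring, Real.rpow_natCast,
    div_pow, one_pow]
  ring

private lemma aux_series (n : ℕ) {x : ℝ} (hx : 0 < x) :
    ∑' k : ℕ, 2 * x ^ n * Real.exp (-((2 * (k : ℝ) + 1) * x)) = x ^ n / Real.sinh x := by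
  have hr : Real.exp (-(2 * x)) < 1 := by
    rw [Real.exp_lt_one_iff]; linarith
  have hterm : ∀ k : ℕ, 2 * x ^ n * Real.exp (-((2 * (k : ℝ) + 1) * x))
      = (2 * x ^ n * Real.exp (-x)) * (Real.exp (-(2 * x))) ^ k := by
    intro k
    rw [show (-((2 * (k : ℝ) + 1) * x)) = -x + (k : ℕ) * (-(2 * x)) by push_cast; ring,
      Real.exp_add, Real.exp_nat_mul]
    ring
  rw [tsum_congr hterm, tsum_mul_left,
    tsum_geometric_of_lt_one (Real.exp_nonneg _) hr]
  have h1 : 1 - Real.exp (-(2 * x)) ≠ 0 := by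
    have := hr; intro h; nlinarith [Real.exp_pos (-(2*x))]
  have hs : Real.sinh x ≠ 0 := (Real.sinh_pos_iff.mpr hx).ne'
  have hexp : Real.exp (-(2 * x)) = Real.exp (-x) * Real.exp (-x) := by
    rw [← Real.exp_add]; congr 1; ring
  have hx1 : Real.exp (-x) * Real.exp x = 1 := by
    rw [← Real.exp_add]; simp
  have hne : Real.exp x - Real.exp (-x) ≠ 0 := by
    have := Real.exp_lt_exp.mpr (by linarith : -x < x)
    linarith
  rw [Real.sinh_eq] at hs ⊢
  rw [hexp] at h1 ⊢
  have hEe : Real.exp x - Real.exp (-x) = Real.exp x * (1 - Real.exp (-x) * Real.exp (-x)) := by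
    linear_combination Real.exp (-x) * hx1
  rw [eq_div_iff hs, hEe]
  calc _ = x ^ n * (Real.exp (-x) * Real.exp x)
        * ((1 - Real.exp (-x) * Real.exp (-x))⁻¹ * (1 - Real.exp (-x) * Real.exp (-x))) := by ring
    _ = x ^ n := by rw [inv_mul_cancel₀ h1, hx1]; ring

private lemma aux_summable (n : ℕ) (hn : 1 ≤ n) :
    Summable (fun k : ℕ => (1:ℝ) / (2 * (k : ℝ) + 1) ^ (n + 1)) := by
  have h1 : Summable (fun k : ℕ => (1:ℝ) / ((k : ℝ)) ^ (n + 1)) :=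
    Real.summable_one_div_nat_pow.mpr (by omega)
  have h2 : Summable (fun k : ℕ => (1:ℝ) / ((k : ℝ) + 1) ^ (n + 1)) := by
    have := (summable_nat_add_iff 1).mpr h1
    simpa using this
  refine Summable.of_nonneg_of_le (fun k => by positivity) (fun k => ?_) h2
  have hk : (0:ℝ) ≤ (k : ℝ) := Nat.cast_nonneg k
  refine one_div_le_one_div_of_le (by positivity) ?_
  exact pow_le_pow_left₀ (by positivity) (by linarith) _

private lemma aux_Ioi (n : ℕ) (hn : 1 ≤ n) :
    ∫ x in Ioi (0:ℝ), x ^ n / Real.sinh x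
      = ∑' k : ℕ, 2 * (n.factorial : ℝ) / (2 * (k : ℝ) + 1) ^ (n + 1) := by
  set F : ℕ → ℝ → ℝ := fun k x => 2 * x ^ n * Real.exp (-((2 * (k : ℝ) + 1) * x)) with hF
  have hF_int : ∀ k : ℕ, Integrable (F k) (volume.restrict (Ioi 0)) := by
    intro k
    have := ((aux_integrable n (c := 2 * (k : ℝ) + 1) (by positivity)).const_mul 2)
    simpa [hF, mul_assoc] using this
  have hval : ∀ k : ℕ, ∫ x in Ioi (0:ℝ), F k x
      = 2 * (n.factorial : ℝ) / (2 * (k : ℝ) + 1) ^ (n + 1) := by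
    intro k
    simp_rw [hF, mul_assoc]
    rw [MeasureTheory.integral_const_mul, aux_integral n (by positivity)]
    ring
  have hnorm : ∀ k : ℕ, (∫ x in Ioi (0:ℝ), ‖F k x‖)
      = 2 * (n.factorial : ℝ) / (2 * (k : ℝ) + 1) ^ (n + 1) := by
    intro k
    rw [← hval k]
    refine setIntegral_congr_fun measurableSet_Ioi (fun x hx => ?_)
    rw [Real.norm_of_nonneg]
    have : (0:ℝ) < x := hx
    positivity
  have hsum : Summable (fun k : ℕ => ∫ x in Ioi (0:ℝ), ‖F k x‖) := by
    rw [show (fun k : ℕ => ∫ x in Ioi (0:ℝ), ‖F k x‖)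
        = fun k : ℕ => 2 * (n.factorial : ℝ) / (2 * (k : ℝ) + 1) ^ (n + 1) from
      funext hnorm]
    have := (aux_summable n hn).mul_left (2 * (n.factorial : ℝ))
    simpa [div_eq_mul_inv] using this
  have key := MeasureTheory.integral_tsum_of_summable_integral_norm hF_int hsum
  calc ∫ x in Ioi (0:ℝ), x ^ n / Real.sinh x
      = ∫ x in Ioi (0:ℝ), ∑' k : ℕ, F k x :=
        setIntegral_congr_fun measurableSet_Ioi (fun x hx => (aux_series n hx).symm)
    _ = ∑' k : ℕ, ∫ x in Ioi (0:ℝ), F k x := key.symm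
    _ = ∑' k : ℕ, 2 * (n.factorial : ℝ) / (2 * (k : ℝ) + 1) ^ (n + 1) := tsum_congr hval

private lemma aux_zeta (n : ℕ) (hn : 1 ≤ n) :
    (∑' k : ℕ, (1:ℂ) / (2 * (k : ℂ) + 1) ^ (n + 1))
      = (1 - 1 / 2 ^ (n + 1)) * riemannZeta ((n : ℂ) + 1) := by
  have hz : riemannZeta ((n : ℂ) + 1) = ∑' m : ℕ, 1 / (m : ℂ) ^ (n + 1) := by
    have := zeta_nat_eq_tsum_of_gt_one (k := n + 1) (by omega)
    rwa [show (((n + 1 : ℕ) : ℂ)) = (n : ℂ) + 1 by push_cast; ring] at this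
  have hsm : Summable (fun m : ℕ => (1:ℂ) / (m : ℂ) ^ (n + 1)) := by
    apply Summable.of_norm
    have h1 : Summable (fun k : ℕ => (1:ℝ) / ((k : ℝ)) ^ (n + 1)) :=
      Real.summable_one_div_nat_pow.mpr (by omega)
    refine h1.congr fun m => ?_
    simp [norm_div, Complex.norm_natCast]
  have he : Summable (fun k : ℕ => (1:ℂ) / ((2 * k : ℕ) : ℂ) ^ (n + 1)) :=
    hsm.comp_injective (fun a b h => by omega)
  have ho : Summable (fun k : ℕ => (1:ℂ) / ((2 * k + 1 : ℕ) : ℂ) ^ (n + 1)) :=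
    hsm.comp_injective (fun a b h => by omega)
  have hsplit := tsum_even_add_odd (f := fun m : ℕ => (1:ℂ) / (m : ℂ) ^ (n + 1)) he ho
  have heven : (∑' k : ℕ, (1:ℂ) / ((2 * k : ℕ) : ℂ) ^ (n + 1))
      = (1 / 2 ^ (n + 1)) * ∑' m : ℕ, (1:ℂ) / (m : ℂ) ^ (n + 1) := by
    rw [← tsum_mul_left]
    refine tsum_congr fun k => ?_
    push_cast
    rw [mul_pow]
    rw [div_mul_eq_mul_div, one_mul, div_div]
    rw [one_div, one_div, mul_inv]
    ring
  have hodd : (∑' k : ℕ, (1:ℂ) / (2 * (k : ℂ) + 1) ^ (n + 1))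
      = ∑' k : ℕ, (1:ℂ) / ((2 * k + 1 : ℕ) : ℂ) ^ (n + 1) := by
    refine tsum_congr fun k => ?_
    push_cast
    ring_nf
  rw [hodd, hz]
  have := hsplit
  rw [heven] at this
  linear_combination this

/-- For `n ≥ 1`, `∫ x^n / sinh x dx = (1-(-1)^n)(2^{n+1}-1)/2^n · n! · ζ(n+1)`. -/
theorem integral_pow_div_sinh (n : ℕ) (hn : 1 ≤ n) :
    ((∫ x : ℝ, x ^ n / Real.sinh x : ℝ) : ℂ) =
      (1 - (-1 : ℂ) ^ n) * (2 ^ (n + 1) - 1) / 2 ^ n * (Nat.factorial n) * riemannZeta ((n : ℂ) + 1) := by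
  rcases Nat.even_or_odd n with he | ho
  · have h1 : ((-1 : ℂ)) ^ n = 1 := he.neg_one_pow
    have h0 : (∫ x : ℝ, x ^ n / Real.sinh x) = 0 := by
      set f : ℝ → ℝ := fun x => x ^ n / Real.sinh x with hf
      have A : MeasurableEmbedding (fun x : ℝ => -x) :=
        (Homeomorph.neg ℝ).measurableEmbedding
      have key : (∫ x : ℝ, f x) = ∫ x : ℝ, f (-x) := by
        conv_lhs => rw [← Measure.map_neg_eq_self (volume : Measure ℝ)]
        exact A.integral_map f
      have hodd : ∀ x : ℝ, f (-x) = -f x := by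
        intro x
        simp only [hf, he.neg_pow, Real.sinh_neg, div_neg]
      rw [funext hodd, MeasureTheory.integral_neg] at key
      linarith
    rw [h0, h1]
    simp
  · have h1 : ((-1 : ℂ)) ^ n = -1 := ho.neg_one_pow
    have heven : ∀ x : ℝ, |x| ^ n / Real.sinh |x| = x ^ n / Real.sinh x := by
      intro x
      rcases le_or_gt 0 x with hx | hx
      · rw [abs_of_nonneg hx]
      · rw [abs_of_neg hx, ho.neg_pow, Real.sinh_neg, neg_div_neg_eq]
    have h2 : (∫ x : ℝ, x ^ n / Real.sinh x)
        = 2 * ∫ x in Ioi (0:ℝ), x ^ n / Real.sinh x := by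
      rw [← integral_comp_abs (f := fun x => x ^ n / Real.sinh x)]
      exact integral_congr_ae (Filter.Eventually.of_forall fun x => (heven x).symm)
    rw [h2, aux_Ioi n hn]
    push_cast [Complex.ofReal_tsum]
    have hrw : ∀ k : ℕ, (2 * (n.factorial : ℂ) / (2 * (k : ℂ) + 1) ^ (n + 1))
        = (2 * (n.factorial : ℂ)) * ((1:ℂ) / (2 * (k : ℂ) + 1) ^ (n + 1)) := by
      intro k; ring
    rw [tsum_congr hrw, tsum_mul_left, aux_zeta n hn, h1]
    have h2n : (2:ℂ) ^ n ≠ 0 := pow_ne_zero _ two_ne_zero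
    have h2n1 : (2:ℂ) ^ (n + 1) ≠ 0 := pow_ne_zero _ two_ne_zero
    field_simp
    ring
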